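/- The polynomial u_{d+1} is the characteristic polynomial of A; that is, u_{d+1}(λ) = Π_{i=0}^d (λ − θ_i). -/

import Mathlib

open Polynomial

/-- u_{d+1} is the characteristic polynomial of A, namely ∏ᵢ (λ − θᵢ). -/
theorem stmt_13 {𝕜 : Type*} [Field 𝕜] {V : Type*} [AddCommGroup V] [Module 𝕜 V]
    [FiniteDimensional 𝕜 V] {d : ℕ} (hdim : Module.finrank 𝕜 V = d + 1)
    (A : Module.End 𝕜 V)
    (Estar : Fin (d + 1) → Module.End 𝕜 V)
    (hidem : ∀ i j, Estar i * Estar j = if i = j then Estar i else 0)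
    (hrank : ∀ i, Module.finrank 𝕜 (LinearMap.range (Estar i)) = 1)
    (htri : ∀ i j : Fin (d + 1), 1 < |((i : ℕ) : ℤ) - ((j : ℕ) : ℤ)| → Estar i * A * Estar j = 0)
    (hirr : ∀ i j : Fin (d + 1), |((i : ℕ) : ℤ) - ((j : ℕ) : ℤ)| = 1 → Estar i * A * Estar j ≠ 0)
    (hd : 1 ≤ d)
    (θ : Fin (d + 1) → 𝕜) (hθ : Function.Injective θ)
    (E : Fin (d + 1) → Module.End 𝕜 V)
    (hEidem : ∀ i j, E i * E j = if i = j then E i else 0)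
    (hErank : ∀ i, Module.finrank 𝕜 (LinearMap.range (E i)) = 1)
    (hA : A = ∑ i, θ i • E i)
    (v : Module.Basis (Fin (d + 1)) 𝕜 V) (hfeas : ∀ i, v i ∈ LinearMap.range (Estar i))
    (a b c : ℕ → 𝕜)
    (hM : ∀ i j : Fin (d + 1), LinearMap.toMatrix v v A i j =
      if (i : ℕ) = (j : ℕ) then a i
      else if (i : ℕ) + 1 = (j : ℕ) then b i
      else if (j : ℕ) + 1 = (i : ℕ) then c i else 0)
    (ha : ∀ i : Fin (d + 1), a i = LinearMap.trace 𝕜 V (Estar i * A))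
    (hb : ∀ i, i < d → b i ≠ 0) (hbd : b d = 0)
    (hc : ∀ i, 0 < i → i ≤ d → c i ≠ 0) (hc0 : c 0 = 0)
    (u : ℕ → Polynomial 𝕜) (hu0 : u 0 = 1)
    (hu : ∀ i, i < d → Polynomial.X * u i =
      Polynomial.C (c i) * u (i - 1) + Polynomial.C (a i) * u i + Polynomial.C (b i) * u (i + 1))
    (hud : Polynomial.X * u d =
      Polynomial.C (c d) * u (d - 1) + Polynomial.C (a d) * u d +
        Polynomial.C (∏ h ∈ Finset.range d, b h)⁻¹ * u (d + 1))
    : u (d + 1) = ∏ i : Fin (d + 1), (Polynomial.X - Polynomial.C (θ i)) := by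
  classical
  set v0 : V := v ⟨0, by omega⟩ with hv0
  -- ∑ E i = 1
  have hsumE : (∑ i, E i) = 1 := by
    have hex : ∀ i, ∃ y, E i y ≠ 0 := by
      intro i
      by_contra h
      push_neg at h
      have hE0 : E i = 0 := LinearMap.ext fun y => h y
      have := hErank i
      rw [hE0, LinearMap.range_zero] at this
      simp at this
    choose y hy using hex
    set e : Fin (d + 1) → V := fun i => E i (y i) with he
    have hEe : ∀ i j, E i (e j) = if i = j then e j else 0 := by
      intro i j
      have : E i (E j (y j)) = (E i * E j) (y j) := rfl
      rw [he, this, hEidem]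
      split_ifs with h
      · subst h; rfl
      · rfl
    have hli : LinearIndependent 𝕜 e := by
      rw [Fintype.linearIndependent_iff]
      intro g hg i
      have h2 := congrArg (E i) hg
      rw [map_sum, map_zero] at h2
      simp only [map_smul, hEe, smul_ite, smul_zero] at h2
      rw [Finset.sum_ite_eq] at h2
      simp only [Finset.mem_univ, if_true] at h2
      rcases smul_eq_zero.mp h2 with h | h
      · exact h
      · exact absurd h (hy i)
    have hcard : Fintype.card (Fin (d + 1)) = Module.finrank 𝕜 V := by simp [hdim]
    apply Module.Basis.ext (basisOfLinearIndependentOfCardEqFinrank hli hcard)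
    intro i
    rw [congrFun (coe_basisOfLinearIndependentOfCardEqFinrank hli hcard) i]
    simp only [LinearMap.sum_apply, hEe, Module.End.one_apply]
    rw [Finset.sum_ite_eq' Finset.univ i (fun _ => e i)]
    simp
  -- A - t·1 = ∑ (θ i - t) • E i
  have hAsub : ∀ t : 𝕜, A - t • (1 : Module.End 𝕜 V) = ∑ i, (θ i - t) • E i := by
    intro t
    rw [hA]
    rw [show t • (1 : Module.End 𝕜 V) = ∑ i, t • E i by rw [← Finset.smul_sum, hsumE]]
    rw [← Finset.sum_sub_distrib]
    simp [sub_smul]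
  have hmulE : ∀ x z : Fin (d + 1) → 𝕜,
      (∑ i, x i • E i) * (∑ i, z i • E i) = ∑ i, (x i * z i) • E i := by
    intro x z
    rw [Finset.sum_mul_sum]
    apply Finset.sum_congr rfl
    intro i _
    simp only [smul_mul_smul_comm, hEidem, smul_ite, smul_zero]
    rw [Finset.sum_ite_eq Finset.univ i (fun j => (x i * z j) • E i)]
    simp
  have hps : ∀ s : Finset (Fin (d + 1)),
      Polynomial.aeval A (∏ j ∈ s, (X - C (θ j))) = ∑ i, (∏ j ∈ s, (θ i - θ j)) • E i := by
    intro s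
    induction s using Finset.induction with
    | empty => simpa using hsumE.symm
    | @insert j s hj ih =>
      rw [Finset.prod_insert hj, map_mul, ih]
      have hterm : Polynomial.aeval A (X - C (θ j)) = ∑ i, (θ i - θ j) • E i := by
        rw [← hAsub]
        simp [Algebra.algebraMap_eq_smul_one]
      rw [hterm, hmulE]
      apply Finset.sum_congr rfl
      intro i _
      rw [Finset.prod_insert hj]
  have hq0 : Polynomial.aeval A (∏ i : Fin (d + 1), (X - C (θ i))) = 0 := by
    rw [hps Finset.univ]
    apply Finset.sum_eq_zero
    intro i _
    rw [Finset.prod_eq_zero (Finset.mem_univ i) (by simp), zero_smul]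
  -- the action of A on basis vectors
  have hAv : ∀ (k : ℕ) (hk : k < d + 1),
      A (v ⟨k, hk⟩) = (if h : k = 0 then 0 else b (k - 1) • v ⟨k - 1, by omega⟩)
        + a k • v ⟨k, hk⟩ + (if h : k + 1 < d + 1 then c (k + 1) • v ⟨k + 1, h⟩ else 0) := by
    intro k hk
    apply v.repr.injective
    ext j
    have h1 : v.repr (A (v ⟨k, hk⟩)) j = LinearMap.toMatrix v v A j ⟨k, hk⟩ :=
      (LinearMap.toMatrix_apply v v A j ⟨k, hk⟩).symm
    rw [h1, hM]
    rcases j with ⟨jv, hj⟩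
    simp only [Fin.val_mk]
    split_ifs <;>
      simp only [map_zero, Finsupp.coe_zero, Pi.zero_apply, map_add, Finsupp.add_apply, map_smul,
        Finsupp.smul_apply, Module.Basis.repr_self, Finsupp.single_apply, Fin.mk.injEq, Fin.val_mk,
        smul_eq_mul] <;>
      split_ifs <;>
      simp only [mul_one, mul_zero, add_zero, zero_add] <;>
      first
        | rfl
        | omega
        | (congr 1 <;> omega)
  set γ : ℕ → 𝕜 := fun k => (∏ h ∈ Finset.range k, c (h + 1)) * (∏ h ∈ Finset.range k, b h)⁻¹
    with hγdef
  have hγs : ∀ k, γ (k + 1) = γ k * c (k + 1) * (b k)⁻¹ := by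
    intro k
    simp only [hγdef, Finset.prod_range_succ, mul_inv]
    ring
  have hγne : ∀ k, k ≤ d → γ k ≠ 0 := by
    intro k hk
    apply mul_ne_zero
    · exact Finset.prod_ne_zero_iff.mpr fun h hh =>
        hc (h + 1) (by omega) (by have := Finset.mem_range.mp hh; omega)
    · exact inv_ne_zero (Finset.prod_ne_zero_iff.mpr fun h hh =>
        hb h (by have := Finset.mem_range.mp hh; omega))
  have hbal : ∀ i, 1 ≤ i → i ≤ d → γ i * b (i - 1) = c i * γ (i - 1) := by
    intro i h1 h2
    have h3 := hγs (i - 1)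
    rw [show i - 1 + 1 = i by omega] at h3
    rw [h3]
    have hbne : b (i - 1) ≠ 0 := hb _ (by omega)
    field_simp
  have step : ∀ i (hi : i < d),
      Polynomial.aeval A (u (i - 1)) v0 = γ (i - 1) • v ⟨i - 1, by omega⟩ →
      Polynomial.aeval A (u i) v0 = γ i • v ⟨i, by omega⟩ →
      Polynomial.aeval A (u (i + 1)) v0 = γ (i + 1) • v ⟨i + 1, by omega⟩ := by
    intro i hi hprev hcur
    have hbi := hb i hi
    have h1 : A (Polynomial.aeval A (u i) v0) =
        c i • (Polynomial.aeval A (u (i - 1)) v0) + a i • (Polynomial.aeval A (u i) v0) +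
          b i • (Polynomial.aeval A (u (i + 1)) v0) := by
      have h0 := congrArg (fun p => Polynomial.aeval A p v0) (hu i hi)
      simpa [Module.algebraMap_end_apply] using h0
    rw [hprev, hcur, map_smul, hAv i (by omega), dif_pos (show i + 1 < d + 1 by omega)] at h1
    have hb1 : b i • (Polynomial.aeval A (u (i + 1)) v0) =
        (γ i * c (i + 1)) • v ⟨i + 1, by omega⟩ := by
      rcases Nat.eq_zero_or_pos i with h0 | h0
      · subst h0
        rw [dif_pos rfl, hc0] at h1
        linear_combination (norm := module) -h1
      · rw [dif_neg (by omega : ¬ i = 0)] at h1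
        have hx : (γ i * b (i - 1)) • v ⟨i - 1, by omega⟩ =
            (c i * γ (i - 1)) • v ⟨i - 1, by omega⟩ := by
          rw [hbal i h0 (by omega)]
        linear_combination (norm := module) hx - h1
    have h2 : Polynomial.aeval A (u (i + 1)) v0 =
        (b i)⁻¹ • ((γ i * c (i + 1)) • v ⟨i + 1, by omega⟩) := by
      rw [← hb1, smul_smul, inv_mul_cancel₀ hbi, one_smul]
    rw [h2, smul_smul, hγs, show (b i)⁻¹ * (γ i * c (i + 1)) = γ i * c (i + 1) * (b i)⁻¹ by ring]
  have key : ∀ k, (hk : k ≤ d) → Polynomial.aeval A (u k) v0 = γ k • v ⟨k, by omega⟩ := by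
    have base : Polynomial.aeval A (u 0) v0 = γ 0 • v ⟨0, by omega⟩ := by
      simp [hu0, hγdef, hv0]
    have main : ∀ k (hk : k ≤ d),
        Polynomial.aeval A (u k) v0 = γ k • v ⟨k, by omega⟩ ∧
        Polynomial.aeval A (u (k - 1)) v0 = γ (k - 1) • v ⟨k - 1, by omega⟩ := by
      intro k
      induction k with
      | zero => intro _; exact ⟨base, base⟩
      | succ n ih =>
        intro hk
        obtain ⟨h1, h2⟩ := ih (by omega)
        refine ⟨step n (by omega) h2 h1, ?_⟩
        simpa using h1
    intro k hk
    exact (main k hk).1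
  have hprodbne : (∏ h ∈ Finset.range d, b h) ≠ 0 :=
    Finset.prod_ne_zero_iff.mpr fun h hh => hb h (Finset.mem_range.mp hh)
  have hlast : Polynomial.aeval A (u (d + 1)) v0 = 0 := by
    have h1 : A (Polynomial.aeval A (u d) v0) =
        c d • (Polynomial.aeval A (u (d - 1)) v0) + a d • (Polynomial.aeval A (u d) v0) +
          (∏ h ∈ Finset.range d, b h)⁻¹ • (Polynomial.aeval A (u (d + 1)) v0) := by
      have h0 := congrArg (fun p => Polynomial.aeval A p v0) hud
      simpa [Module.algebraMap_end_apply] using h0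
    rw [key d le_rfl, key (d - 1) (by omega), map_smul, hAv d (by omega),
      dif_neg (by omega : ¬ d = 0), dif_neg (by omega : ¬ d + 1 < d + 1)] at h1
    have hx : (γ d * b (d - 1)) • v ⟨d - 1, by omega⟩ =
        (c d * γ (d - 1)) • v ⟨d - 1, by omega⟩ := by
      rw [hbal d hd le_rfl]
    have h2 : (∏ h ∈ Finset.range d, b h)⁻¹ • (Polynomial.aeval A (u (d + 1)) v0) = 0 := by
      linear_combination (norm := module) hx - h1
    rcases smul_eq_zero.mp h2 with h | h
    · exact absurd h (inv_ne_zero hprodbne)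
    · exact h
  -- degrees and leading coefficients
  have hdeg : ∀ k (hk : k ≤ d),
      (u k).natDegree ≤ k ∧ (u k).coeff k = (∏ h ∈ Finset.range k, b h)⁻¹ := by
    have base : (u 0).natDegree ≤ 0 ∧ (u 0).coeff 0 = (∏ h ∈ Finset.range 0, b h)⁻¹ := by
      simp [hu0]
    have dstep : ∀ i (hi : i < d),
        ((u (i-1)).natDegree ≤ i - 1 ∧ (u (i-1)).coeff (i-1) = (∏ h ∈ Finset.range (i-1), b h)⁻¹) →
        ((u i).natDegree ≤ i ∧ (u i).coeff i = (∏ h ∈ Finset.range i, b h)⁻¹) →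
        ((u (i+1)).natDegree ≤ i + 1 ∧
          (u (i+1)).coeff (i+1) = (∏ h ∈ Finset.range (i+1), b h)⁻¹) := by
      intro i hi hprev hcur
      have hbi := hb i hi
      have hCne : (C (b i) : Polynomial 𝕜) ≠ 0 := by simpa using hbi
      have h2 : u (i + 1) = C (b i)⁻¹ * (X * u i - C (c i) * u (i - 1) - C (a i) * u i) := by
        apply mul_left_cancel₀ hCne
        rw [← mul_assoc, ← C_mul, mul_inv_cancel₀ hbi, C_1, one_mul]
        linear_combination -(hu i hi)
      have hco : ∀ N : ℕ, (u (i + 1)).coeff (N + 1) =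
          (b i)⁻¹ * ((u i).coeff N - c i * (u (i - 1)).coeff (N + 1)
            - a i * (u i).coeff (N + 1)) := by
        intro N
        rw [h2, coeff_C_mul, coeff_sub, coeff_sub, coeff_X_mul, coeff_C_mul, coeff_C_mul]
      constructor
      · rw [natDegree_le_iff_coeff_eq_zero]
        intro N hN
        obtain ⟨M, rfl⟩ : ∃ M, N = M + 1 := ⟨N - 1, by omega⟩
        rw [hco, coeff_eq_zero_of_natDegree_lt (by omega : (u i).natDegree < M),
          coeff_eq_zero_of_natDegree_lt (by omega : (u (i-1)).natDegree < M + 1),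
          coeff_eq_zero_of_natDegree_lt (by omega : (u i).natDegree < M + 1)]
        ring
      · rw [hco i, hcur.2,
          coeff_eq_zero_of_natDegree_lt (by omega : (u (i-1)).natDegree < i + 1),
          coeff_eq_zero_of_natDegree_lt (by omega : (u i).natDegree < i + 1),
          Finset.prod_range_succ, mul_inv]
        ring
    have main : ∀ k (hk : k ≤ d),
        ((u k).natDegree ≤ k ∧ (u k).coeff k = (∏ h ∈ Finset.range k, b h)⁻¹) ∧
        ((u (k-1)).natDegree ≤ k - 1 ∧
          (u (k-1)).coeff (k-1) = (∏ h ∈ Finset.range (k-1), b h)⁻¹) := by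
      intro k
      induction k with
      | zero => intro _; exact ⟨base, base⟩
      | succ n ih =>
        intro hk
        obtain ⟨h1, h2⟩ := ih (by omega)
        refine ⟨dstep n (by omega) h2 h1, ?_⟩
        simpa using h1
    intro k hk
    exact (main k hk).1
  have h2d : u (d + 1) = C (∏ h ∈ Finset.range d, b h) *
      (X * u d - C (c d) * u (d - 1) - C (a d) * u d) := by
    have hCne : (C (∏ h ∈ Finset.range d, b h)⁻¹ : Polynomial 𝕜) ≠ 0 := by
      simpa using inv_ne_zero hprodbne
    apply mul_left_cancel₀ hCne
    rw [← mul_assoc, ← C_mul, inv_mul_cancel₀ hprodbne, C_1, one_mul]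
    linear_combination -hud
  have hcoD : ∀ N : ℕ, (u (d + 1)).coeff (N + 1) =
      (∏ h ∈ Finset.range d, b h) * ((u d).coeff N - c d * (u (d - 1)).coeff (N + 1)
        - a d * (u d).coeff (N + 1)) := by
    intro N
    rw [h2d, coeff_C_mul, coeff_sub, coeff_sub, coeff_X_mul, coeff_C_mul, coeff_C_mul]
  have hd1 := hdeg d le_rfl
  have hd2 := hdeg (d - 1) (by omega)
  have hudeg : (u (d + 1)).natDegree ≤ d + 1 := by
    rw [natDegree_le_iff_coeff_eq_zero]
    intro N hN
    obtain ⟨M, rfl⟩ : ∃ M, N = M + 1 := ⟨N - 1, by omega⟩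
    rw [hcoD, coeff_eq_zero_of_natDegree_lt (by omega : (u d).natDegree < M),
      coeff_eq_zero_of_natDegree_lt (by omega : (u (d-1)).natDegree < M + 1),
      coeff_eq_zero_of_natDegree_lt (by omega : (u d).natDegree < M + 1)]
    ring
  have hulead : (u (d + 1)).coeff (d + 1) = 1 := by
    rw [hcoD d, hd1.2,
      coeff_eq_zero_of_natDegree_lt (by omega : (u (d-1)).natDegree < d + 1),
      coeff_eq_zero_of_natDegree_lt (by omega : (u d).natDegree < d + 1),
      mul_zero, mul_zero, sub_zero, sub_zero, mul_inv_cancel₀ hprodbne]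
  -- the characteristic polynomial
  set q : Polynomial 𝕜 := ∏ i : Fin (d + 1), (X - C (θ i)) with hqdef
  have hqmonic : q.Monic := monic_prod_of_monic _ _ fun i _ => monic_X_sub_C _
  have hqdeg : q.natDegree = d + 1 := by
    rw [hqdef, natDegree_prod_of_monic _ _ fun i _ => monic_X_sub_C _]
    simp
  have hq1 : q.coeff (d + 1) = 1 := by
    rw [← hqdeg]
    exact hqmonic.coeff_natDegree
  -- the evaluation map on polynomials of degree < d + 1
  have hWrank : Module.finrank 𝕜 (Polynomial.degreeLT 𝕜 (d + 1)) = d + 1 := by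
    rw [(Polynomial.degreeLTEquiv 𝕜 (d + 1)).finrank_eq]
    simp
  set φ : (Polynomial.degreeLT 𝕜 (d + 1) : Submodule 𝕜 (Polynomial 𝕜)) →ₗ[𝕜] V :=
    (LinearMap.applyₗ v0).comp ((Polynomial.aeval A).toLinearMap.comp
      (Polynomial.degreeLT 𝕜 (d + 1)).subtype) with hφdef
  have hφapp : ∀ p, φ p = Polynomial.aeval A (p : Polynomial 𝕜) v0 := fun p => rfl
  have hmem : ∀ k (hk : k ≤ d), u k ∈ Polynomial.degreeLT 𝕜 (d + 1) := by
    intro k hk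
    rw [Polynomial.mem_degreeLT, Polynomial.degree_lt_iff_coeff_zero]
    intro m hm
    exact coeff_eq_zero_of_natDegree_lt (by have := (hdeg k hk).1; omega)
  have hsurj : Function.Surjective φ := by
    rw [← LinearMap.range_eq_top, ← top_le_iff, ← v.span_eq, Submodule.span_le]
    rintro x ⟨i, rfl⟩
    have hk : (i : ℕ) ≤ d := by omega
    refine ⟨(γ (i : ℕ))⁻¹ • ⟨u (i : ℕ), hmem (i : ℕ) hk⟩, ?_⟩
    rw [map_smul, hφapp, key (i : ℕ) hk, smul_smul, inv_mul_cancel₀ (hγne (i : ℕ) hk), one_smul]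
  haveI : FiniteDimensional 𝕜 (Polynomial.degreeLT 𝕜 (d + 1)) :=
    FiniteDimensional.of_finrank_eq_succ hWrank
  have hinj : Function.Injective φ :=
    (LinearMap.injective_iff_surjective_of_finrank_eq_finrank (by rw [hWrank, hdim])).mpr hsurj
  have hrm : u (d + 1) - q ∈ Polynomial.degreeLT 𝕜 (d + 1) := by
    rw [Polynomial.mem_degreeLT, Polynomial.degree_lt_iff_coeff_zero]
    intro m hm
    rcases eq_or_lt_of_le hm with h | h
    · rw [← h, coeff_sub, hulead, hq1, sub_self]
    · rw [coeff_sub, coeff_eq_zero_of_natDegree_lt (by omega),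
        coeff_eq_zero_of_natDegree_lt (by rw [hqdeg]; omega), sub_zero]
  have hz : φ ⟨u (d + 1) - q, hrm⟩ = 0 := by
    rw [hφapp]
    show Polynomial.aeval A (u (d + 1) - q) v0 = 0
    rw [map_sub, LinearMap.sub_apply, hlast, hq0, LinearMap.zero_apply, sub_zero]
  have hz2 : (⟨u (d + 1) - q, hrm⟩ : Polynomial.degreeLT 𝕜 (d + 1)) = 0 := by
    apply hinj
    rw [hz, map_zero]
  have hz3 := Subtype.ext_iff.mp hz2
  simpa [sub_eq_zero] using hz3
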